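/- Suppose h and h̃ are two mixing densities that are both strictly positive in a neighborhood of zero. If there exists η > 0 such that the ratio u ↦ h(u)/h̃(u) is a strictly increasing function on (0, η], then λ_h ≤ λ_{h̃} (as elements of [0,∞]). -/

import Mathlib

open MeasureTheory Set
open scoped ENNReal

/-- A mixing density: a Borel measurable function on `(0,∞)` (extended to all of `ℝ`),
nonnegative on `(0,∞)`, integrating to 1 over `(0,∞)`. -/
def IsMixingDensity (h : ℝ → ℝ) : Prop :=
  Measurable h ∧ (∀ u ∈ Ioi (0:ℝ), 0 ≤ h u) ∧
    ∫⁻ u in Ioi (0:ℝ), ENNReal.ofReal (h u) = 1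

/-- `∫_0^∞ u^{-1/2} e^{-su/2} h(u) du`, as an element of `[0,∞]`. -/
noncomputable def mixNum (h : ℝ → ℝ) (s : ℝ) : ℝ≥0∞ :=
  ∫⁻ u in Ioi (0:ℝ), ENNReal.ofReal (u ^ (-(1:ℝ) / 2) * Real.exp (-(s * u) / 2) * h u)

/-- `∫_0^∞ u^{1/2} e^{-su/2} h(u) du`, as an element of `[0,∞]`. -/
noncomputable def mixDen (h : ℝ → ℝ) (s : ℝ) : ℝ≥0∞ :=
  ∫⁻ u in Ioi (0:ℝ), ENNReal.ofReal (u ^ ((1:ℝ) / 2) * Real.exp (-(s * u) / 2) * h u)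

/-- `h ∈ A(λ)`: there is a constant `k` with
`(∫_0^∞ u^{-1/2} e^{-su/2} h du)/(∫_0^∞ u^{1/2} e^{-su/2} h du) ≤ λ s + k` for all `s ≥ 0`. -/
def MemA (h : ℝ → ℝ) (l : ℝ) : Prop :=
  0 ≤ l ∧ ∃ k : ℝ, ∀ s : ℝ, 0 ≤ s → mixNum h s / mixDen h s ≤ ENNReal.ofReal (l * s + k)

/-- `λ_h ∈ [0,∞]`: the infimum of `{λ ∈ [0,∞) : h ∈ A(λ)}` (equal to `∞` if this set is empty). -/
noncomputable def lambdaH (h : ℝ → ℝ) : ℝ≥0∞ :=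
  sInf (ENNReal.ofReal '' {l : ℝ | MemA h l})

private lemma cheb_lintegral {μ : Measure ℝ} {S : Set ℝ} (hS : ∀ᵐ u ∂μ, u ∈ S)
    {A B C E : ℝ → ℝ≥0∞} (hA : Measurable A) (hB : Measurable B) (hC : Measurable C)
    (hE : Measurable E)
    (hpt : ∀ u ∈ S, ∀ v ∈ S, A u * B v + A v * B u ≤ C u * E v + C v * E u) :
    (∫⁻ u, A u ∂μ) * (∫⁻ u, B u ∂μ) ≤ (∫⁻ u, C u ∂μ) * (∫⁻ u, E u ∂μ) := by
  have key : ∫⁻ u, ∫⁻ v, (A u * B v + A v * B u) ∂μ ∂μ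
      ≤ ∫⁻ u, ∫⁻ v, (C u * E v + C v * E u) ∂μ ∂μ :=
    lintegral_mono_ae (hS.mono fun u hu =>
      lintegral_mono_ae (hS.mono fun v hv => hpt u hu v hv))
  have expand : ∀ (F G : ℝ → ℝ≥0∞), Measurable F → Measurable G →
      ∫⁻ u, ∫⁻ v, (F u * G v + F v * G u) ∂μ ∂μ
        = 2 * ((∫⁻ u, F u ∂μ) * (∫⁻ u, G u ∂μ)) := by
    intro F G hF hG
    have inner : ∀ u, ∫⁻ v, (F u * G v + F v * G u) ∂μ
        = F u * (∫⁻ v, G v ∂μ) + (∫⁻ v, F v ∂μ) * G u := by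
      intro u
      rw [lintegral_add_left (hG.const_mul _), lintegral_const_mul _ hG,
        lintegral_mul_const _ hF]
    simp_rw [inner]
    rw [lintegral_add_left (hF.mul_const _), lintegral_mul_const _ hF,
      lintegral_const_mul _ hG]
    ring
  rw [expand A B hA hB, expand C E hC hE] at key
  exact (ENNReal.mul_le_mul_iff_right two_ne_zero ENNReal.ofNat_ne_top).mp key

private lemma pos_lint {f : ℝ → ℝ≥0∞} (hf : Measurable f) {a b : ℝ} (hab : a < b)
    {S : Set ℝ} (hsub : Ioo a b ⊆ S)
    (hpos : ∀ u ∈ Ioo a b, 0 < f u) :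
    0 < ∫⁻ u in S, f u := by
  rw [lintegral_pos_iff_support hf]
  calc (0:ℝ≥0∞) < volume.restrict S (Ioo a b) := by
        rw [Measure.restrict_apply measurableSet_Ioo, inter_eq_left.2 hsub,
          Real.volume_Ioo]
        exact ENNReal.ofReal_pos.2 (by linarith)
    _ ≤ volume.restrict S (Function.support f) :=
        measure_mono fun u hu => (hpos u hu).ne'

private lemma rpow_half_eq (u : ℝ) : u ^ ((1:ℝ)/2) = Real.sqrt u :=
  (Real.sqrt_eq_rpow u).symm

private lemma rpow_neg_half_eq {u : ℝ} (hu : 0 ≤ u) :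
    u ^ (-(1:ℝ)/2) = (Real.sqrt u)⁻¹ := by
  rw [show (-(1:ℝ)/2) = -((1:ℝ)/2) by norm_num, Real.rpow_neg hu, ← Real.sqrt_eq_rpow]

private lemma L1 {c u : ℝ} (hc : 0 < c) (hu : c ≤ u) :
    u ^ (-(1:ℝ)/2) ≤ c⁻¹ * u ^ ((1:ℝ)/2) := by
  have hu0 : 0 < u := hc.trans_le hu
  rw [rpow_neg_half_eq hu0.le, rpow_half_eq]
  have hs0 : 0 < Real.sqrt u := Real.sqrt_pos.2 hu0
  rw [inv_eq_one_div, div_le_iff₀ hs0, mul_assoc, Real.mul_self_sqrt hu0.le,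
    inv_mul_eq_div, le_div_iff₀ hc]
  linarith

private lemma L2 {u : ℝ} (hu : 0 ≤ u) : u ^ ((1:ℝ)/2) ≤ 3 * Real.exp (u/8) := by
  rw [rpow_half_eq]
  rcases le_total u 9 with h9 | h9
  · have : Real.sqrt u ≤ 3 := by
      rw [show (3:ℝ) = Real.sqrt 9 by
        rw [show (9:ℝ) = 3^2 by norm_num, Real.sqrt_sq (by norm_num)]]
      exact Real.sqrt_le_sqrt h9
    have h1 : (1:ℝ) ≤ Real.exp (u/8) := Real.one_le_exp (by linarith)
    nlinarith
  · have hsq : Real.sqrt u * Real.sqrt u = u := Real.mul_self_sqrt hu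
    have hs3 : (3:ℝ) ≤ Real.sqrt u := by
      rw [show (3:ℝ) = Real.sqrt 9 by
        rw [show (9:ℝ) = 3^2 by norm_num, Real.sqrt_sq (by norm_num)]]
      exact Real.sqrt_le_sqrt h9
    have hex : u/8 + 1 ≤ Real.exp (u/8) := Real.add_one_le_exp _
    nlinarith [Real.sqrt_nonneg u]

private lemma L3 {s u c : ℝ} (hs : 1 ≤ s) (hc : 0 < c) (hu : c ≤ u) :
    u ^ ((1:ℝ)/2) * Real.exp (-(s*u)/2) ≤ 3 * Real.exp (-(3*s*c)/8) := by
  have hu0 : 0 < u := hc.trans_le hu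
  have h1 : u ^ ((1:ℝ)/2) ≤ 3 * Real.exp (u/8) := L2 hu0.le
  have h2 : Real.exp (u/8) * Real.exp (-(s*u)/2) = Real.exp (u/8 + -(s*u)/2) :=
    (Real.exp_add _ _).symm
  have h3 : Real.exp (u/8 + -(s*u)/2) ≤ Real.exp (-(3*s*c)/8) := by
    apply Real.exp_le_exp.2
    nlinarith
  calc u ^ ((1:ℝ)/2) * Real.exp (-(s*u)/2)
      ≤ 3 * Real.exp (u/8) * Real.exp (-(s*u)/2) := by
        exact mul_le_mul_of_nonneg_right h1 (Real.exp_pos _).le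
    _ = 3 * (Real.exp (u/8) * Real.exp (-(s*u)/2)) := by ring
    _ ≤ 3 * Real.exp (-(3*s*c)/8) := by rw [h2]; linarith [h3]

private lemma L4 {s c l k c0 : ℝ} (hs : 1 ≤ s) (hc : 0 < c) (hc0 : 0 < c0)
    (hl : 0 ≤ l) (hk : 0 ≤ k) :
    (l*s+k)*(3*Real.exp (-(3*s*c)/8)) ≤ (3*(8*l/c+k)/c0) * (Real.exp (-(s*c)/4) * c0) := by
  have hs0 : (0:ℝ) ≤ s := by linarith
  have hrhs : (3*(8*l/c+k)/c0) * (Real.exp (-(s*c)/4) * c0)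
      = 3*(8*l/c+k) * Real.exp (-(s*c)/4) := by field_simp
  rw [hrhs]
  have hsplit : Real.exp (-(3*s*c)/8) = Real.exp (-(s*c)/4) * Real.exp (-(s*c)/8) := by
    rw [← Real.exp_add]; ring_nf
  rw [hsplit]
  have hE1 : Real.exp (-(s*c)/8) ≤ 1 := Real.exp_le_one_iff.2 (by nlinarith)
  have hE0 : 0 < Real.exp (-(s*c)/8) := Real.exp_pos _
  have h1 : s * Real.exp (-(s*c)/8) ≤ 8/c := by
    have hex : s*c/8 ≤ Real.exp (s*c/8) := by linarith [Real.add_one_le_exp (s*c/8)]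
    rw [show (-(s*c)/8 : ℝ) = -(s*c/8) by ring, Real.exp_neg, ← div_eq_mul_inv,
      div_le_div_iff₀ (Real.exp_pos _) hc]
    nlinarith
  have hkey : (l*s+k) * Real.exp (-(s*c)/8) ≤ 8*l/c + k := by
    have hA : l*(s*Real.exp (-(s*c)/8)) ≤ l*(8/c) := mul_le_mul_of_nonneg_left h1 hl
    have hB : k*Real.exp (-(s*c)/8) ≤ k*1 := mul_le_mul_of_nonneg_left hE1 hk
    ring_nf at hA hB ⊢
    linarith
  have := mul_le_mul_of_nonneg_left hkey
    (by positivity : (0:ℝ) ≤ 3*Real.exp (-(s*c)/4))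
  ring_nf at this ⊢
  linarith

private lemma L5 {p P q Q Eu Ev hu hv h'u h'v : ℝ} (hEu : 0 ≤ Eu) (hEv : 0 ≤ Ev)
    (hmaj : P*q ≤ p*Q) (hcross : hu*h'v ≤ hv*h'u) :
    (p*Eu*hu)*(Q*Ev*h'v) + (q*Ev*hv)*(P*Eu*h'u)
      ≤ (p*Eu*h'u)*(Q*Ev*hv) + (q*Ev*h'v)*(P*Eu*hu) := by
  have hx : 0 ≤ (Eu*Ev) * ((p*Q - P*q)*(hv*h'u - hu*h'v)) := by
    apply mul_nonneg (mul_nonneg hEu hEv)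
    exact mul_nonneg (by linarith) (by linarith)
  nlinarith [hx]

private lemma L6 {u v : ℝ} (hu : 0 < u) (huv : u ≤ v) :
    u ^ ((1:ℝ)/2) * v ^ (-(1:ℝ)/2) ≤ u ^ (-(1:ℝ)/2) * v ^ ((1:ℝ)/2) := by
  have hv : 0 < v := hu.trans_le huv
  rw [rpow_half_eq, rpow_half_eq, rpow_neg_half_eq hu.le, rpow_neg_half_eq hv.le]
  have h1 : 0 < Real.sqrt u := Real.sqrt_pos.2 hu
  have h2 : 0 < Real.sqrt v := Real.sqrt_pos.2 hv
  have h3 : Real.sqrt u ≤ Real.sqrt v := Real.sqrt_le_sqrt huv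
  rw [← div_eq_mul_inv, mul_comm, ← div_eq_mul_inv, div_le_div_iff₀ h2 h1]
  nlinarith

private noncomputable def NI (f : ℝ → ℝ) (s : ℝ) (S : Set ℝ) : ℝ≥0∞ :=
  ∫⁻ u in S, ENNReal.ofReal (u ^ (-(1:ℝ) / 2) * Real.exp (-(s * u) / 2) * f u)

private noncomputable def DI (f : ℝ → ℝ) (s : ℝ) (S : Set ℝ) : ℝ≥0∞ :=
  ∫⁻ u in S, ENNReal.ofReal (u ^ ((1:ℝ) / 2) * Real.exp (-(s * u) / 2) * f u)

private lemma mixNum_eq (f : ℝ → ℝ) (s : ℝ) : mixNum f s = NI f s (Ioi 0) := rfl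
private lemma mixDen_eq (f : ℝ → ℝ) (s : ℝ) : mixDen f s = DI f s (Ioi 0) := rfl

private lemma NI_mono_set (f : ℝ → ℝ) (s : ℝ) {S T : Set ℝ} (hST : S ⊆ T) :
    NI f s S ≤ NI f s T :=
  lintegral_mono' (Measure.restrict_mono hST le_rfl) le_rfl

private lemma DI_mono_set (f : ℝ → ℝ) (s : ℝ) {S T : Set ℝ} (hST : S ⊆ T) :
    DI f s S ≤ DI f s T :=
  lintegral_mono' (Measure.restrict_mono hST le_rfl) le_rfl

private lemma Ioc_Ioi_disj (c : ℝ) : Disjoint (Ioc (0:ℝ) c) (Ioi c) := by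
  rw [Set.disjoint_left]
  rintro u ⟨_, h1⟩ h2
  exact absurd h1 (not_le.2 h2)

private lemma NI_split (f : ℝ → ℝ) (s : ℝ) {c : ℝ} (hc : 0 ≤ c) :
    NI f s (Ioi 0) = NI f s (Ioc 0 c) + NI f s (Ioi c) := by
  unfold NI
  rw [← Ioc_union_Ioi_eq_Ioi hc, lintegral_union measurableSet_Ioi (Ioc_Ioi_disj c)]

private lemma DI_split (f : ℝ → ℝ) (s : ℝ) {c : ℝ} (hc : 0 ≤ c) :
    DI f s (Ioi 0) = DI f s (Ioc 0 c) + DI f s (Ioi c) := by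
  unfold DI
  rw [← Ioc_union_Ioi_eq_Ioi hc, lintegral_union measurableSet_Ioi (Ioc_Ioi_disj c)]

private lemma memA_of_memA (h h' : ℝ → ℝ)
    (hmix : IsMixingDensity h) (hmix' : IsMixingDensity h')
    (hpos : ∃ ε > 0, ∀ u ∈ Ioo (0:ℝ) ε, 0 < h u)
    (hpos' : ∃ ε > 0, ∀ u ∈ Ioo (0:ℝ) ε, 0 < h' u)
    (hmono : ∃ η > 0, StrictMonoOn (fun u => h u / h' u) (Ioc (0:ℝ) η))
    {l : ℝ} (hA' : MemA h' l) : MemA h l := by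
  obtain ⟨hhm, hh0, hh1⟩ := hmix
  obtain ⟨hh'm, hh'0, hh'1⟩ := hmix'
  obtain ⟨ε, hε, hεpos⟩ := hpos
  obtain ⟨ε', hε', hε'pos⟩ := hpos'
  obtain ⟨η, hη, hmono⟩ := hmono
  obtain ⟨hl0, k0, hk0⟩ := hA'
  set k := max k0 0 with hkdef
  have hk : 0 ≤ k := le_max_right _ _
  have hk' : ∀ s : ℝ, 0 ≤ s → mixNum h' s / mixDen h' s ≤ ENNReal.ofReal (l*s + k) :=
    fun s hs => (hk0 s hs).trans
      (ENNReal.ofReal_le_ofReal (add_le_add_right (le_max_left k0 0) _))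
  set η₀ := min η (min ε ε' / 2) with hη₀def
  have hη₀ : 0 < η₀ := lt_min hη (by positivity)
  have hη₀η : η₀ ≤ η := min_le_left _ _
  have hη₀ε : η₀ < ε := by
    have h1 : min ε ε' ≤ ε := min_le_left _ _
    have h2 : η₀ ≤ min ε ε' / 2 := min_le_right _ _
    linarith
  have hη₀ε' : η₀ < ε' := by
    have h1 : min ε ε' ≤ ε' := min_le_right _ _
    have h2 : η₀ ≤ min ε ε' / 2 := min_le_right _ _
    linarith
  have hhpos : ∀ u ∈ Ioc (0:ℝ) η₀, 0 < h u :=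
    fun u hu => hεpos u ⟨hu.1, lt_of_le_of_lt hu.2 hη₀ε⟩
  have hh'pos : ∀ u ∈ Ioc (0:ℝ) η₀, 0 < h' u :=
    fun u hu => hε'pos u ⟨hu.1, lt_of_le_of_lt hu.2 hη₀ε'⟩
  have hcross : ∀ u ∈ Ioc (0:ℝ) η₀, ∀ v ∈ Ioc (0:ℝ) η₀, u ≤ v →
      h u * h' v ≤ h v * h' u := by
    intro u hu v hv huv
    rcases eq_or_lt_of_le huv with rfl | hlt
    · exact le_rfl
    · have hSsub : Ioc (0:ℝ) η₀ ⊆ Ioc 0 η := Ioc_subset_Ioc le_rfl hη₀η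
      have hm := hmono (hSsub hu) (hSsub hv) hlt
      dsimp only at hm
      have h'u := hh'pos u hu
      have h'v := hh'pos v hv
      rw [div_lt_div_iff₀ h'u h'v] at hm
      linarith
  -- measurability
  have measOfh' : Measurable fun u : ℝ => ENNReal.ofReal (h' u) := by fun_prop
  have measOfh : Measurable fun u : ℝ => ENNReal.ofReal (h u) := by fun_prop
  have measN : ∀ s : ℝ, Measurable fun u : ℝ =>
      ENNReal.ofReal (u ^ (-(1:ℝ) / 2) * Real.exp (-(s * u) / 2) * h u) := fun s => by fun_prop
  have measN' : ∀ s : ℝ, Measurable fun u : ℝ =>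
      ENNReal.ofReal (u ^ (-(1:ℝ) / 2) * Real.exp (-(s * u) / 2) * h' u) := fun s => by fun_prop
  have measD : ∀ s : ℝ, Measurable fun u : ℝ =>
      ENNReal.ofReal (u ^ ((1:ℝ) / 2) * Real.exp (-(s * u) / 2) * h u) := fun s => by fun_prop
  have measD' : ∀ s : ℝ, Measurable fun u : ℝ =>
      ENNReal.ofReal (u ^ ((1:ℝ) / 2) * Real.exp (-(s * u) / 2) * h' u) := fun s => by fun_prop
  have meas_g0 : Measurable fun u : ℝ => ENNReal.ofReal (u ^ ((1:ℝ)/2) * h' u) := by fun_prop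
  -- the constant c0
  set c0e : ℝ≥0∞ := ∫⁻ u in Ioc (0:ℝ) (η₀/2), ENNReal.ofReal (u ^ ((1:ℝ)/2) * h' u)
    with hc0edef
  have hc0pos : 0 < c0e := by
    refine pos_lint meas_g0 (half_pos hη₀) (fun u hu => ⟨hu.1, hu.2.le⟩) ?_
    intro u hu
    exact ENNReal.ofReal_pos.2 (mul_pos (Real.rpow_pos_of_pos hu.1 _)
      (hh'pos u ⟨hu.1, by linarith [hu.2]⟩))
  have hIocIoi : ∀ c : ℝ, 0 < c → (∫⁻ u in Ioc (0:ℝ) c, ENNReal.ofReal (h' u)) ≤ 1 := by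
    intro c hc
    rw [← hh'1]
    exact lintegral_mono' (Measure.restrict_mono (fun u hu => hu.1) le_rfl) le_rfl
  have hc0top : c0e < ⊤ := by
    have hb : c0e ≤ ENNReal.ofReal (η₀ ^ ((1:ℝ)/2))
        * ∫⁻ u in Ioc (0:ℝ) (η₀/2), ENNReal.ofReal (h' u) := by
      rw [hc0edef, ← lintegral_const_mul _ measOfh']
      refine lintegral_mono_ae ((ae_restrict_mem measurableSet_Ioc).mono fun u hu => ?_)
      rw [← ENNReal.ofReal_mul (Real.rpow_nonneg hη₀.le _)]
      apply ENNReal.ofReal_le_ofReal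
      have h1 : u ^ ((1:ℝ)/2) ≤ η₀ ^ ((1:ℝ)/2) :=
        Real.rpow_le_rpow hu.1.le (le_trans hu.2 (by linarith)) (by norm_num)
      exact mul_le_mul_of_nonneg_right h1 (hh'0 u hu.1)
    calc c0e ≤ _ := hb
      _ ≤ ENNReal.ofReal (η₀ ^ ((1:ℝ)/2)) * 1 :=
          mul_le_mul_right (hIocIoi (η₀/2) (half_pos hη₀)) _
      _ < ⊤ := by rw [mul_one]; exact ENNReal.ofReal_lt_top
  set c0 : ℝ := c0e.toReal with hc0def
  have hc0r : 0 < c0 := ENNReal.toReal_pos hc0pos.ne' hc0top.ne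
  have hc0back : ENNReal.ofReal c0 = c0e := ENNReal.ofReal_toReal hc0top.ne
  -- lower bound on the local denominator
  have hDlow : ∀ s : ℝ, 0 ≤ s →
      ENNReal.ofReal (Real.exp (-(s*η₀)/4)) * c0e ≤ DI h' s (Ioc 0 η₀) := by
    intro s hs
    have h1 : (∫⁻ u in Ioc (0:ℝ) (η₀/2),
        ENNReal.ofReal (Real.exp (-(s*η₀)/4)) * ENNReal.ofReal (u ^ ((1:ℝ)/2) * h' u))
        ≤ DI h' s (Ioc 0 (η₀/2)) := by
      unfold DI
      refine lintegral_mono_ae ((ae_restrict_mem measurableSet_Ioc).mono fun u hu => ?_)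
      rw [← ENNReal.ofReal_mul (Real.exp_pos _).le]
      apply ENNReal.ofReal_le_ofReal
      have hE : Real.exp (-(s*η₀)/4) ≤ Real.exp (-(s * u)/2) :=
        Real.exp_le_exp.2 (by nlinarith [hu.1, hu.2])
      have hnn : 0 ≤ u ^ ((1:ℝ)/2) * h' u :=
        mul_nonneg (Real.rpow_nonneg hu.1.le _) (hh'0 u hu.1)
      calc Real.exp (-(s*η₀)/4) * (u ^ ((1:ℝ)/2) * h' u)
          ≤ Real.exp (-(s*u)/2) * (u ^ ((1:ℝ)/2) * h' u) :=
            mul_le_mul_of_nonneg_right hE hnn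
        _ = u ^ ((1:ℝ)/2) * Real.exp (-(s * u)/2) * h' u := by ring
    rw [lintegral_const_mul _ meas_g0] at h1
    exact h1.trans (DI_mono_set h' s (Ioc_subset_Ioc le_rfl (by linarith)))
  have hDη'lt : ∀ s : ℝ, 0 ≤ s → 0 < DI h' s (Ioc 0 η₀) := by
    intro s hs
    refine lt_of_lt_of_le ?_ (hDlow s hs)
    exact ENNReal.mul_pos (ENNReal.ofReal_pos.2 (Real.exp_pos _)).ne' hc0pos.ne'
  -- upper bound on the local denominator
  have hDη'top : ∀ s : ℝ, 0 ≤ s →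
      DI h' s (Ioc 0 η₀) ≤ ENNReal.ofReal (η₀ ^ ((1:ℝ)/2)) := by
    intro s hs
    have h1 : DI h' s (Ioc 0 η₀) ≤ ∫⁻ u in Ioc (0:ℝ) η₀,
        ENNReal.ofReal (η₀ ^ ((1:ℝ)/2)) * ENNReal.ofReal (h' u) := by
      unfold DI
      refine lintegral_mono_ae ((ae_restrict_mem measurableSet_Ioc).mono fun u hu => ?_)
      rw [← ENNReal.ofReal_mul (Real.rpow_nonneg hη₀.le _)]
      apply ENNReal.ofReal_le_ofReal
      have e1 : Real.exp (-(s * u)/2) ≤ 1 := Real.exp_le_one_iff.2 (by nlinarith [hu.1])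
      have h2 : u ^ ((1:ℝ)/2) ≤ η₀ ^ ((1:ℝ)/2) :=
        Real.rpow_le_rpow hu.1.le hu.2 (by norm_num)
      have hn : 0 ≤ h' u := hh'0 u hu.1
      have hr : 0 ≤ u ^ ((1:ℝ)/2) := Real.rpow_nonneg hu.1.le _
      calc u ^ ((1:ℝ)/2) * Real.exp (-(s * u)/2) * h' u
          ≤ u ^ ((1:ℝ)/2) * 1 * h' u := by
            exact mul_le_mul_of_nonneg_right (mul_le_mul_of_nonneg_left e1 hr) hn
        _ = u ^ ((1:ℝ)/2) * h' u := by ring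
        _ ≤ η₀ ^ ((1:ℝ)/2) * h' u := mul_le_mul_of_nonneg_right h2 hn
    rw [lintegral_const_mul _ measOfh'] at h1
    refine h1.trans ?_
    calc _ ≤ ENNReal.ofReal (η₀ ^ ((1:ℝ)/2)) * 1 := mul_le_mul_right (hIocIoi η₀ hη₀) _
      _ = _ := mul_one _
  -- tail bound on the denominator
  have hDtail : ∀ s : ℝ, 1 ≤ s →
      DI h' s (Ioi η₀) ≤ ENNReal.ofReal (3*Real.exp (-(3*s*η₀)/8)) := by
    intro s hs
    have h1 : DI h' s (Ioi η₀) ≤ ∫⁻ u in Ioi η₀,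
        ENNReal.ofReal (3*Real.exp (-(3*s*η₀)/8)) * ENNReal.ofReal (h' u) := by
      unfold DI
      refine lintegral_mono_ae ((ae_restrict_mem measurableSet_Ioi).mono fun u hu => ?_)
      rw [← ENNReal.ofReal_mul (by positivity)]
      apply ENNReal.ofReal_le_ofReal
      have hu0 : 0 < u := hη₀.trans hu
      have h2 := L3 hs hη₀ (le_of_lt hu)
      have hn : 0 ≤ h' u := hh'0 u hu0
      calc u ^ ((1:ℝ)/2) * Real.exp (-(s * u)/2) * h' u
          ≤ 3 * Real.exp (-(3*s*η₀)/8) * h' u := mul_le_mul_of_nonneg_right h2 hn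
        _ = 3 * Real.exp (-(3*s*η₀)/8) * h' u := rfl
    rw [lintegral_const_mul _ measOfh'] at h1
    refine h1.trans ?_
    have hb2 : (∫⁻ u in Ioi η₀, ENNReal.ofReal (h' u)) ≤ 1 := by
      rw [← hh'1]
      exact lintegral_mono' (Measure.restrict_mono (fun u hu => hη₀.trans hu) le_rfl) le_rfl
    calc _ ≤ ENNReal.ofReal (3*Real.exp (-(3*s*η₀)/8)) * 1 := mul_le_mul_right hb2 _
      _ = _ := mul_one _
  -- Chebyshev correlation inequality
  have hcheb : ∀ s : ℝ,
      NI h s (Ioc 0 η₀) * DI h' s (Ioc 0 η₀) ≤ NI h' s (Ioc 0 η₀) * DI h s (Ioc 0 η₀) := by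
    intro s
    unfold NI DI
    refine cheb_lintegral (ae_restrict_mem measurableSet_Ioc)
      (measN s) (measD' s) (measN' s) (measD s) ?_
    have key : ∀ u ∈ Ioc (0:ℝ) η₀, ∀ v ∈ Ioc (0:ℝ) η₀, u ≤ v →
        ENNReal.ofReal (u ^ (-(1:ℝ) / 2) * Real.exp (-(s * u) / 2) * h u) *
            ENNReal.ofReal (v ^ ((1:ℝ) / 2) * Real.exp (-(s * v) / 2) * h' v) +
          ENNReal.ofReal (v ^ (-(1:ℝ) / 2) * Real.exp (-(s * v) / 2) * h v) *
            ENNReal.ofReal (u ^ ((1:ℝ) / 2) * Real.exp (-(s * u) / 2) * h' u) ≤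
        ENNReal.ofReal (u ^ (-(1:ℝ) / 2) * Real.exp (-(s * u) / 2) * h' u) *
            ENNReal.ofReal (v ^ ((1:ℝ) / 2) * Real.exp (-(s * v) / 2) * h v) +
          ENNReal.ofReal (v ^ (-(1:ℝ) / 2) * Real.exp (-(s * v) / 2) * h' v) *
            ENNReal.ofReal (u ^ ((1:ℝ) / 2) * Real.exp (-(s * u) / 2) * h u) := by
      intro u hu v hv huv
      have hu0 : 0 < u := hu.1
      have hv0 : 0 < v := hv.1
      have n1 : 0 ≤ u ^ (-(1:ℝ) / 2) * Real.exp (-(s * u) / 2) * h u :=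
        mul_nonneg (mul_nonneg (Real.rpow_nonneg hu0.le _) (Real.exp_pos _).le)
          (hh0 u hu0)
      have n2 : 0 ≤ v ^ (-(1:ℝ) / 2) * Real.exp (-(s * v) / 2) * h v :=
        mul_nonneg (mul_nonneg (Real.rpow_nonneg hv0.le _) (Real.exp_pos _).le)
          (hh0 v hv0)
      have n3 : 0 ≤ u ^ (-(1:ℝ) / 2) * Real.exp (-(s * u) / 2) * h' u :=
        mul_nonneg (mul_nonneg (Real.rpow_nonneg hu0.le _) (Real.exp_pos _).le)
          (hh'0 u hu0)
      have n4 : 0 ≤ v ^ (-(1:ℝ) / 2) * Real.exp (-(s * v) / 2) * h' v :=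
        mul_nonneg (mul_nonneg (Real.rpow_nonneg hv0.le _) (Real.exp_pos _).le)
          (hh'0 v hv0)
      have n5 : 0 ≤ (u ^ (-(1:ℝ) / 2) * Real.exp (-(s * u) / 2) * h u) *
          (v ^ ((1:ℝ) / 2) * Real.exp (-(s * v) / 2) * h' v) :=
        mul_nonneg n1 (mul_nonneg (mul_nonneg (Real.rpow_nonneg hv0.le _)
          (Real.exp_pos _).le) (hh'0 v hv0))
      have n6 : 0 ≤ (v ^ (-(1:ℝ) / 2) * Real.exp (-(s * v) / 2) * h v) *
          (u ^ ((1:ℝ) / 2) * Real.exp (-(s * u) / 2) * h' u) :=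
        mul_nonneg n2 (mul_nonneg (mul_nonneg (Real.rpow_nonneg hu0.le _)
          (Real.exp_pos _).le) (hh'0 u hu0))
      have n7 : 0 ≤ (u ^ (-(1:ℝ) / 2) * Real.exp (-(s * u) / 2) * h' u) *
          (v ^ ((1:ℝ) / 2) * Real.exp (-(s * v) / 2) * h v) :=
        mul_nonneg n3 (mul_nonneg (mul_nonneg (Real.rpow_nonneg hv0.le _)
          (Real.exp_pos _).le) (hh0 v hv0))
      rw [← ENNReal.ofReal_mul n1, ← ENNReal.ofReal_mul n2, ← ENNReal.ofReal_add n5 n6,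
        ← ENNReal.ofReal_mul n3, ← ENNReal.ofReal_mul n4, ← ENNReal.ofReal_add n7
          (mul_nonneg n4 (mul_nonneg (mul_nonneg (Real.rpow_nonneg hu0.le _)
            (Real.exp_pos _).le) (hh0 u hu0)))]
      apply ENNReal.ofReal_le_ofReal
      have hmaj : u ^ ((1:ℝ)/2) * v ^ (-(1:ℝ)/2) ≤ u ^ (-(1:ℝ)/2) * v ^ ((1:ℝ)/2) :=
        L6 hu0 huv
      have := L5 (hu := h u) (hv := h v) (h'u := h' u) (h'v := h' v)
        (p := u ^ (-(1:ℝ)/2)) (P := u ^ ((1:ℝ)/2)) (q := v ^ (-(1:ℝ)/2))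
        (Q := v ^ ((1:ℝ)/2)) (Eu := Real.exp (-(s*u)/2)) (Ev := Real.exp (-(s*v)/2))
        (Real.exp_pos _).le (Real.exp_pos _).le (by linarith [hmaj])
        (hcross u hu v hv huv)
      calc u ^ (-(1:ℝ) / 2) * Real.exp (-(s * u) / 2) * h u *
            (v ^ ((1:ℝ) / 2) * Real.exp (-(s * v) / 2) * h' v) +
          v ^ (-(1:ℝ) / 2) * Real.exp (-(s * v) / 2) * h v *
            (u ^ ((1:ℝ) / 2) * Real.exp (-(s * u) / 2) * h' u)
          = (u ^ (-(1:ℝ)/2) * Real.exp (-(s*u)/2) * h u) *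
              (v ^ ((1:ℝ)/2) * Real.exp (-(s*v)/2) * h' v) +
            (v ^ (-(1:ℝ)/2) * Real.exp (-(s*v)/2) * h v) *
              (u ^ ((1:ℝ)/2) * Real.exp (-(s*u)/2) * h' u) := by ring
        _ ≤ (u ^ (-(1:ℝ)/2) * Real.exp (-(s*u)/2) * h' u) *
              (v ^ ((1:ℝ)/2) * Real.exp (-(s*v)/2) * h v) +
            (v ^ (-(1:ℝ)/2) * Real.exp (-(s*v)/2) * h' v) *
              (u ^ ((1:ℝ)/2) * Real.exp (-(s*u)/2) * h u) := this
        _ = _ := by ring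
    intro u hu v hv
    rcases le_total u v with huv | hvu
    · exact key u hu v hv huv
    · have hk2 := key v hv u hu hvu
      calc _ = ENNReal.ofReal (v ^ (-(1:ℝ) / 2) * Real.exp (-(s * v) / 2) * h v) *
            ENNReal.ofReal (u ^ ((1:ℝ) / 2) * Real.exp (-(s * u) / 2) * h' u) +
          ENNReal.ofReal (u ^ (-(1:ℝ) / 2) * Real.exp (-(s * u) / 2) * h u) *
            ENNReal.ofReal (v ^ ((1:ℝ) / 2) * Real.exp (-(s * v) / 2) * h' v) := add_comm _ _
        _ ≤ _ := hk2
        _ = _ := add_comm _ _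
  -- main bound, s ≥ 1
  obtain ⟨K₁, hK₁def⟩ : ∃ x : ℝ, x = k + 3*(8*l/η₀+k)/c0 := ⟨_, rfl⟩
  have hK₁0 : 0 ≤ K₁ := by
    have h8 : (0:ℝ) ≤ 8*l/η₀ := div_nonneg (by linarith) hη₀.le
    have h9 : (0:ℝ) ≤ 3*(8*l/η₀+k)/c0 := div_nonneg (by linarith) hc0r.le
    rw [hK₁def]
    linarith
  have hR : ∀ s : ℝ, 1 ≤ s →
      NI h' s (Ioc 0 η₀) ≤ ENNReal.ofReal (l*s + K₁) * DI h' s (Ioc 0 η₀) := by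
    intro s hs1
    have hs0 : (0:ℝ) ≤ s := by linarith
    have hD'ne : mixDen h' s ≠ 0 := by
      have : 0 < mixDen h' s := by
        refine lt_of_lt_of_le (hDη'lt s hs0) ?_
        rw [mixDen_eq, DI_split h' s hη₀.le]
        exact le_self_add
      exact this.ne'
    have hD'top : mixDen h' s ≠ ⊤ := by
      rw [mixDen_eq, DI_split h' s hη₀.le]
      exact (lt_of_le_of_lt (add_le_add (hDη'top s hs0) (hDtail s hs1))
        (ENNReal.add_lt_top.2 ⟨ENNReal.ofReal_lt_top, ENNReal.ofReal_lt_top⟩)).ne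
    have hN' : mixNum h' s ≤ ENNReal.ofReal (l*s+k) * mixDen h' s :=
      (ENNReal.div_le_iff hD'ne hD'top).1 (hk' s hs0)
    have hls : (0:ℝ) ≤ l*s+k := add_nonneg (mul_nonneg hl0 hs0) hk
    have step1 : NI h' s (Ioc 0 η₀) ≤ ENNReal.ofReal (l*s+k) * DI h' s (Ioc 0 η₀)
        + ENNReal.ofReal (l*s+k) * DI h' s (Ioi η₀) := by
      calc NI h' s (Ioc 0 η₀) ≤ mixNum h' s := by
            rw [mixNum_eq]; exact NI_mono_set h' s (fun u hu => hu.1)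
        _ ≤ ENNReal.ofReal (l*s+k) * mixDen h' s := hN'
        _ = _ := by rw [mixDen_eq, DI_split h' s hη₀.le, mul_add]
    have step2 : ENNReal.ofReal (l*s+k) * DI h' s (Ioi η₀)
        ≤ ENNReal.ofReal (3*(8*l/η₀+k)/c0) * DI h' s (Ioc 0 η₀) := by
      have h8 : (0:ℝ) ≤ 8*l/η₀ := div_nonneg (by linarith) hη₀.le
      calc ENNReal.ofReal (l*s+k) * DI h' s (Ioi η₀)
          ≤ ENNReal.ofReal (l*s+k) * ENNReal.ofReal (3*Real.exp (-(3*s*η₀)/8)) :=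
            mul_le_mul_right (hDtail s hs1) _
        _ = ENNReal.ofReal ((l*s+k)*(3*Real.exp (-(3*s*η₀)/8))) :=
            (ENNReal.ofReal_mul hls).symm
        _ ≤ ENNReal.ofReal ((3*(8*l/η₀+k)/c0) * (Real.exp (-(s*η₀)/4) * c0)) :=
            ENNReal.ofReal_le_ofReal (L4 hs1 hη₀ hc0r hl0 hk)
        _ = ENNReal.ofReal (3*(8*l/η₀+k)/c0) *
              (ENNReal.ofReal (Real.exp (-(s*η₀)/4)) * ENNReal.ofReal c0) := by
            rw [ENNReal.ofReal_mul (div_nonneg (by linarith) hc0r.le),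
              ENNReal.ofReal_mul (Real.exp_pos _).le]
        _ = ENNReal.ofReal (3*(8*l/η₀+k)/c0) *
              (ENNReal.ofReal (Real.exp (-(s*η₀)/4)) * c0e) := by rw [hc0back]
        _ ≤ _ := mul_le_mul_right (hDlow s hs0) _
    calc NI h' s (Ioc 0 η₀)
        ≤ ENNReal.ofReal (l*s+k) * DI h' s (Ioc 0 η₀)
          + ENNReal.ofReal (3*(8*l/η₀+k)/c0) * DI h' s (Ioc 0 η₀) :=
          step1.trans (add_le_add_right step2 _)
      _ = (ENNReal.ofReal (l*s+k) + ENNReal.ofReal (3*(8*l/η₀+k)/c0))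
            * DI h' s (Ioc 0 η₀) := (add_mul _ _ _).symm
      _ = ENNReal.ofReal (l*s + K₁) * DI h' s (Ioc 0 η₀) := by
          rw [← ENNReal.ofReal_add hls (div_nonneg (by
            have h8 : (0:ℝ) ≤ 8*l/η₀ := div_nonneg (by linarith) hη₀.le
            linarith) hc0r.le)]
          congr 1
          rw [hK₁def]; ring
  -- main bound, all s ≥ 0
  obtain ⟨K₀, hK₀def⟩ : ∃ x : ℝ, x = Real.exp (η₀/2) * (l + K₁) + K₁ := ⟨_, rfl⟩
  have hK₀0 : 0 ≤ K₀ := by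
    have h9 : (0:ℝ) ≤ Real.exp (η₀/2) * (l + K₁) :=
      mul_nonneg (Real.exp_pos _).le (by linarith)
    rw [hK₀def]
    linarith
  have hRF : ∀ s : ℝ, 0 ≤ s →
      NI h' s (Ioc 0 η₀) ≤ ENNReal.ofReal (l*s + K₀) * DI h' s (Ioc 0 η₀) := by
    intro s hs0
    rcases le_total 1 s with hs1 | hs1
    · refine (hR s hs1).trans (mul_le_mul_left (ENNReal.ofReal_le_ofReal ?_) _)
      have : (0:ℝ) ≤ Real.exp (η₀/2) * (l + K₁) :=
        mul_nonneg (Real.exp_pos _).le (by linarith)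
      rw [hK₀def]; linarith
    · have e1 : NI h' s (Ioc 0 η₀)
          ≤ ENNReal.ofReal (Real.exp (η₀/2)) * NI h' 1 (Ioc 0 η₀) := by
        unfold NI
        rw [← lintegral_const_mul _ (measN' 1)]
        refine lintegral_mono_ae ((ae_restrict_mem measurableSet_Ioc).mono fun u hu => ?_)
        rw [← ENNReal.ofReal_mul (Real.exp_pos _).le]
        apply ENNReal.ofReal_le_ofReal
        have hEc : Real.exp (-(s * u)/2) ≤ Real.exp (η₀/2) * Real.exp (-(1 * u)/2) := by
          rw [← Real.exp_add]
          apply Real.exp_le_exp.2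
          nlinarith [hu.1, hu.2]
        have hnn : 0 ≤ u ^ (-(1:ℝ)/2) * h' u :=
          mul_nonneg (Real.rpow_nonneg hu.1.le _) (hh'0 u hu.1)
        calc u ^ (-(1:ℝ) / 2) * Real.exp (-(s * u) / 2) * h' u
            = Real.exp (-(s * u)/2) * (u ^ (-(1:ℝ)/2) * h' u) := by ring
          _ ≤ (Real.exp (η₀/2) * Real.exp (-(1 * u)/2)) * (u ^ (-(1:ℝ)/2) * h' u) :=
              mul_le_mul_of_nonneg_right hEc hnn
          _ = Real.exp (η₀/2) * (u ^ (-(1:ℝ) / 2) * Real.exp (-(1 * u) / 2) * h' u) := by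
              ring
      have e2 : DI h' 1 (Ioc 0 η₀) ≤ DI h' s (Ioc 0 η₀) := by
        unfold DI
        refine lintegral_mono_ae ((ae_restrict_mem measurableSet_Ioc).mono fun u hu => ?_)
        apply ENNReal.ofReal_le_ofReal
        have hEc : Real.exp (-(1 * u)/2) ≤ Real.exp (-(s * u)/2) :=
          Real.exp_le_exp.2 (by nlinarith [hu.1])
        have hnn : 0 ≤ u ^ ((1:ℝ)/2) * h' u :=
          mul_nonneg (Real.rpow_nonneg hu.1.le _) (hh'0 u hu.1)
        calc u ^ ((1:ℝ) / 2) * Real.exp (-(1 * u) / 2) * h' u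
            = Real.exp (-(1 * u)/2) * (u ^ ((1:ℝ)/2) * h' u) := by ring
          _ ≤ Real.exp (-(s * u)/2) * (u ^ ((1:ℝ)/2) * h' u) :=
              mul_le_mul_of_nonneg_right hEc hnn
          _ = u ^ ((1:ℝ) / 2) * Real.exp (-(s * u) / 2) * h' u := by ring
      calc NI h' s (Ioc 0 η₀) ≤ ENNReal.ofReal (Real.exp (η₀/2)) * NI h' 1 (Ioc 0 η₀) := e1
        _ ≤ ENNReal.ofReal (Real.exp (η₀/2)) *
              (ENNReal.ofReal (l*1 + K₁) * DI h' 1 (Ioc 0 η₀)) :=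
            mul_le_mul_right (hR 1 le_rfl) _
        _ = (ENNReal.ofReal (Real.exp (η₀/2)) * ENNReal.ofReal (l*1 + K₁))
              * DI h' 1 (Ioc 0 η₀) := (mul_assoc _ _ _).symm
        _ ≤ (ENNReal.ofReal (Real.exp (η₀/2)) * ENNReal.ofReal (l*1 + K₁))
              * DI h' s (Ioc 0 η₀) := mul_le_mul_right e2 _
        _ ≤ ENNReal.ofReal (l*s + K₀) * DI h' s (Ioc 0 η₀) := by
            refine mul_le_mul_left ?_ _
            rw [← ENNReal.ofReal_mul (Real.exp_pos _).le]
            apply ENNReal.ofReal_le_ofReal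
            have hls : 0 ≤ l*s := mul_nonneg hl0 hs0
            rw [hK₀def]
            nlinarith [Real.exp_pos (η₀/2)]
  -- tail bound on the numerator
  have hNtail : ∀ s : ℝ,
      NI h s (Ioi η₀) ≤ ENNReal.ofReal η₀⁻¹ * DI h s (Ioi η₀) := by
    intro s
    unfold NI DI
    rw [← lintegral_const_mul _ (measD s)]
    refine lintegral_mono_ae ((ae_restrict_mem measurableSet_Ioi).mono fun u hu => ?_)
    rw [← ENNReal.ofReal_mul (inv_nonneg.2 hη₀.le)]
    apply ENNReal.ofReal_le_ofReal
    have hu0 : 0 < u := hη₀.trans hu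
    have h2 := L1 hη₀ (le_of_lt hu)
    have hnn : 0 ≤ Real.exp (-(s * u)/2) * h u :=
      mul_nonneg (Real.exp_pos _).le (hh0 u hu0)
    calc u ^ (-(1:ℝ) / 2) * Real.exp (-(s * u) / 2) * h u
        = u ^ (-(1:ℝ)/2) * (Real.exp (-(s * u)/2) * h u) := by ring
      _ ≤ (η₀⁻¹ * u ^ ((1:ℝ)/2)) * (Real.exp (-(s * u)/2) * h u) :=
          mul_le_mul_of_nonneg_right h2 hnn
      _ = η₀⁻¹ * (u ^ ((1:ℝ) / 2) * Real.exp (-(s * u) / 2) * h u) := by ring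
  -- positivity of the full denominator
  have hDpos : ∀ s : ℝ, 0 < mixDen h s := by
    intro s
    rw [mixDen_eq]
    unfold DI
    refine pos_lint (measD s) hη₀ (fun u hu => hu.1) ?_
    intro u hu
    exact ENNReal.ofReal_pos.2 (mul_pos (mul_pos (Real.rpow_pos_of_pos hu.1 _)
      (Real.exp_pos _)) (hεpos u ⟨hu.1, hu.2.trans hη₀ε⟩))
  -- conclusion
  refine ⟨hl0, K₀ + η₀⁻¹, fun s hs => ?_⟩
  by_cases hDtop : mixDen h s = ⊤
  · rw [hDtop, ENNReal.div_top]
    exact zero_le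
  · rw [ENNReal.div_le_iff (hDpos s).ne' hDtop]
    have hDη'ne : DI h' s (Ioc 0 η₀) ≠ 0 := (hDη'lt s hs).ne'
    have hDη'fin : DI h' s (Ioc 0 η₀) ≠ ⊤ :=
      (lt_of_le_of_lt (hDη'top s hs) ENNReal.ofReal_lt_top).ne
    have c1 : NI h s (Ioc 0 η₀) ≤ ENNReal.ofReal (l*s+K₀) * mixDen h s := by
      have step : NI h s (Ioc 0 η₀) * DI h' s (Ioc 0 η₀)
          ≤ (ENNReal.ofReal (l*s+K₀) * DI h s (Ioc 0 η₀)) * DI h' s (Ioc 0 η₀) := by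
        calc NI h s (Ioc 0 η₀) * DI h' s (Ioc 0 η₀)
            ≤ NI h' s (Ioc 0 η₀) * DI h s (Ioc 0 η₀) := hcheb s
          _ ≤ (ENNReal.ofReal (l*s+K₀) * DI h' s (Ioc 0 η₀)) * DI h s (Ioc 0 η₀) :=
              mul_le_mul_left (hRF s hs) _
          _ = _ := by ring
      have h3 := (ENNReal.mul_le_mul_iff_left hDη'ne hDη'fin).1 step
      refine h3.trans (mul_le_mul_right ?_ _)
      rw [mixDen_eq]
      exact DI_mono_set h s (fun u hu => hu.1)
    have c2 : NI h s (Ioi η₀) ≤ ENNReal.ofReal η₀⁻¹ * mixDen h s := by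
      refine (hNtail s).trans (mul_le_mul_right ?_ _)
      rw [mixDen_eq]
      exact DI_mono_set h s (fun u hu => hη₀.trans hu)
    calc mixNum h s = NI h s (Ioc 0 η₀) + NI h s (Ioi η₀) := by
          rw [mixNum_eq]; exact NI_split h s hη₀.le
      _ ≤ ENNReal.ofReal (l*s+K₀) * mixDen h s + ENNReal.ofReal η₀⁻¹ * mixDen h s :=
          add_le_add c1 c2
      _ = (ENNReal.ofReal (l*s+K₀) + ENNReal.ofReal η₀⁻¹) * mixDen h s :=
          (add_mul _ _ _).symm
      _ = ENNReal.ofReal (l*s + (K₀ + η₀⁻¹)) * mixDen h s := by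
          rw [← ENNReal.ofReal_add (add_nonneg (mul_nonneg hl0 hs) hK₀0)
            (inv_nonneg.2 hη₀.le)]
          congr 1
          ring

/-- If two mixing densities `h`, `h̃` are strictly positive in a neighborhood of zero and
`u ↦ h(u)/h̃(u)` is strictly increasing on `(0, η]` for some `η > 0`, then `λ_h ≤ λ_h̃`. -/
theorem lambdaH_le_of_ratio_strictMono (h h' : ℝ → ℝ)
    (hmix : IsMixingDensity h) (hmix' : IsMixingDensity h')
    (hpos : ∃ ε > 0, ∀ u ∈ Ioo (0:ℝ) ε, 0 < h u)
    (hpos' : ∃ ε > 0, ∀ u ∈ Ioo (0:ℝ) ε, 0 < h' u)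
    (hmono : ∃ η > 0, StrictMonoOn (fun u => h u / h' u) (Ioc (0:ℝ) η)) :
    lambdaH h ≤ lambdaH h' := by
  apply sInf_le_sInf
  apply image_mono
  intro l hl
  exact memA_of_memA h h' hmix hmix' hpos hpos' hmono hl
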